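/- Let n ≥ 1 and let t, ξ ∈ ℝⁿ be co-oriented timelike vectors for the Minkowski bilinear form, i.e. η(t,t) < 0, η(ξ,ξ) < 0 and η(t,ξ) < 0. Then the quadratic form p ↦ 2·η(p,t)·η(p,ξ) − η(t,ξ)·η(p,p) is positive semidefinite: for every p ∈ ℝⁿ one has 2·η(p,t)·η(p,ξ) − η(t,ξ)·η(p,p) ≥ 0. -/
import Mathlib


open scoped BigOperators

/-- The Minkowski bilinear form on `ℝⁿ`: `η(x,y) = -x₀y₀ + ∑_{i≥1} xᵢyᵢ`. -/
def minkowski {n : ℕ} (x y : Fin n → ℝ) : ℝ :=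
  ∑ i : Fin n, (if (i : ℕ) = 0 then (-1 : ℝ) else 1) * x i * y i

/-- The spatial (Euclidean) dot product, ignoring coordinate `0`. -/
def sdot {n : ℕ} (x y : Fin n → ℝ) : ℝ :=
  ∑ i : Fin n, (if (i : ℕ) = 0 then 0 else x i * y i)

lemma sdot_self_nonneg {n : ℕ} (x : Fin n → ℝ) : 0 ≤ sdot x x := by
  apply Finset.sum_nonneg
  intro i _
  by_cases h : (i : ℕ) = 0 <;> simp [h, mul_self_nonneg]

/-- Cauchy–Schwarz for the spatial dot product. -/
lemma sdot_sq_le {n : ℕ} (x y : Fin n → ℝ) :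
    (sdot x y) ^ 2 ≤ sdot x x * sdot y y := by
  unfold sdot
  rw [show (∑ i : Fin n, (if (i : ℕ) = 0 then 0 else x i * y i))
      = ∑ i ∈ Finset.univ.filter (fun i : Fin n => ¬ (i : ℕ) = 0), x i * y i by
    rw [Finset.sum_filter]; apply Finset.sum_congr rfl; intro i _
    by_cases h : (i : ℕ) = 0 <;> simp [h]]
  rw [show (∑ i : Fin n, (if (i : ℕ) = 0 then 0 else x i * x i))
      = ∑ i ∈ Finset.univ.filter (fun i : Fin n => ¬ (i : ℕ) = 0), x i ^ 2 by
    rw [Finset.sum_filter]; apply Finset.sum_congr rfl; intro i _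
    by_cases h : (i : ℕ) = 0 <;> simp [h, sq]]
  rw [show (∑ i : Fin n, (if (i : ℕ) = 0 then 0 else y i * y i))
      = ∑ i ∈ Finset.univ.filter (fun i : Fin n => ¬ (i : ℕ) = 0), y i ^ 2 by
    rw [Finset.sum_filter]; apply Finset.sum_congr rfl; intro i _
    by_cases h : (i : ℕ) = 0 <;> simp [h, sq]]
  exact Finset.sum_mul_sq_le_sq_mul_sq _ _ _

lemma mink_decomp {n : ℕ} (hn : 1 ≤ n) (x y : Fin n → ℝ) :
    minkowski x y = -(x ⟨0, hn⟩ * y ⟨0, hn⟩) + sdot x y := by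
  unfold minkowski sdot
  rw [show (-(x ⟨0, hn⟩ * y ⟨0, hn⟩))
      = ∑ i : Fin n, (if i = (⟨0, hn⟩ : Fin n) then -(x i * y i) else 0) by
    rw [Finset.sum_ite_eq' Finset.univ]; simp]
  rw [← Finset.sum_add_distrib]
  apply Finset.sum_congr rfl
  intro i _
  have hiff : (i = (⟨0, hn⟩ : Fin n)) ↔ ((i : ℕ) = 0) := by
    constructor
    · intro h; rw [h]
    · intro h; exact Fin.ext h
  by_cases h : (i : ℕ) = 0 <;> simp [h, hiff] <;> ring_nf

lemma mink_comm {n : ℕ} (x y : Fin n → ℝ) : minkowski x y = minkowski y x := by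
  unfold minkowski; apply Finset.sum_congr rfl; intros; ring

lemma mink_lin {n : ℕ} (a b : ℝ) (x y z : Fin n → ℝ) :
    minkowski (fun i => a * x i - b * y i) z
      = a * minkowski x z - b * minkowski y z := by
  unfold minkowski
  rw [Finset.mul_sum, Finset.mul_sum, ← Finset.sum_sub_distrib]
  apply Finset.sum_congr rfl; intros; ring

lemma aux_pos {A B : ℝ} (h : B < A) (hsq : B ^ 2 < A ^ 2) : 0 < A := by nlinarith

lemma aux_ge {w s : ℝ} (hsq : s ^ 2 ≤ w ^ 2) (hw : w ≤ 0) : 0 ≤ -(w) + s := by nlinarith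

lemma aux_sign {x y q : ℝ} (h1 : x * y ≤ 0) (h2 : 0 < y * q) : x * q ≤ 0 := by
  have hy : y ≠ 0 := by rintro rfl; simp at h2
  have h4 : 0 < y ^ 2 := by positivity
  have h3 : x * y * (y * q) ≤ 0 := mul_nonpos_of_nonpos_of_nonneg h1 h2.le
  nlinarith [h3, h4]

lemma aux_v0 {V c t0sqP : ℝ} (hkey : V = -(1/2) * c ^ 2 - (1/2) * t0sqP) (h : 0 ≤ t0sqP) :
    V ≤ 0 := by nlinarith [sq_nonneg c]

/-- For co-oriented timelike vectors `t, ξ`, the quadratic form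
`p ↦ 2 η(p,t) η(p,ξ) − η(t,ξ) η(p,p)` is positive semidefinite. -/
theorem cooriented_timelike_quadratic_form_nonneg
    (n : ℕ) (hn : 1 ≤ n) (t ξ : Fin n → ℝ)
    (ht : minkowski t t < 0) (hξ : minkowski ξ ξ < 0)
    (htξ : minkowski t ξ < 0) :
    ∀ p : Fin n → ℝ,
      0 ≤ 2 * minkowski p t * minkowski p ξ - minkowski t ξ * minkowski p p := by
  intro p
  set z : Fin n := ⟨0, hn⟩ with hz
  set t0 := t z with ht0; set ξ0 := ξ z with hξ0; set p0 := p z with hp0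
  have hdt : minkowski t t = -(t0 * t0) + sdot t t := mink_decomp hn t t
  have hdξ : minkowski ξ ξ = -(ξ0 * ξ0) + sdot ξ ξ := mink_decomp hn ξ ξ
  have hdtξ : minkowski t ξ = -(t0 * ξ0) + sdot t ξ := mink_decomp hn t ξ
  have hsqt : t0 ^ 2 = t0 * t0 := sq t0
  have hsqξ : ξ0 ^ 2 = ξ0 * ξ0 := sq ξ0
  have hT : sdot t t < t0 ^ 2 := by linarith
  have hX : sdot ξ ξ < ξ0 ^ 2 := by linarith
  have hTnn := sdot_self_nonneg t
  have hXnn := sdot_self_nonneg ξ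
  have hPnn := sdot_self_nonneg p
  -- `t0 ξ0 > 0` (co-orientation forces the time components on the same side)
  have htξsq : (sdot t ξ) ^ 2 < (t0 * ξ0) ^ 2 := by
    calc (sdot t ξ) ^ 2 ≤ sdot t t * sdot ξ ξ := sdot_sq_le t ξ
      _ < t0 ^ 2 * ξ0 ^ 2 :=
          mul_lt_mul_of_nonneg_of_pos' (le_of_lt hT) hX hXnn (lt_of_le_of_lt hTnn hT)
      _ = (t0 * ξ0) ^ 2 := by ring
  have ht0ξ0 : 0 < t0 * ξ0 := aux_pos (by linarith) htξsq
  -- the auxiliary causal vector `v = η(p,t)·p − ½η(p,p)·t`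
  set a := minkowski p t with ha
  set b := minkowski p p / 2 with hb
  set v : Fin n → ℝ := fun i => a * p i - b * t i with hv
  have hvξ : minkowski v ξ = a * minkowski p ξ - b * minkowski t ξ := mink_lin a b p t ξ
  have hvv : minkowski v v = a * minkowski p v - b * minkowski t v := mink_lin a b p t v
  have hpv : minkowski p v = a * minkowski p p - b * minkowski p t := by
    rw [mink_comm p v, hv, mink_lin a b p t p, mink_comm t p]
  have htv : minkowski t v = a * minkowski p t - b * minkowski t t := by
    rw [mink_comm t v, hv, mink_lin a b p t t]
  have hvv' : minkowski v v = (minkowski p p) ^ 2 * minkowski t t / 4 := by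
    rw [hvv, hpv, htv, hb]; ring
  -- decompositions
  have hdp : minkowski p p = -(p0 * p0) + sdot p p := mink_decomp hn p p
  have hdpt : minkowski p t = -(p0 * t0) + sdot p t := mink_decomp hn p t
  have hdv : minkowski v ξ = -(v z * ξ0) + sdot v ξ := mink_decomp hn v ξ
  have hdvv : minkowski v v = -(v z * v z) + sdot v v := mink_decomp hn v v
  have hvz : v z = a * p0 - b * t0 := rfl
  -- `v₀ t₀ ≤ 0`
  have hc2 : (sdot p t) ^ 2 ≤ sdot p p * t0 ^ 2 := by
    calc (sdot p t) ^ 2 ≤ sdot p p * sdot t t := sdot_sq_le p t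
      _ ≤ sdot p p * t0 ^ 2 := mul_le_mul_of_nonneg_left (le_of_lt hT) hPnn
  have hv0t0 : v z * t0 ≤ 0 := by
    refine aux_v0 (c := p0 * t0 - sdot p t)
      (t0sqP := t0 ^ 2 * sdot p p - (sdot p t) ^ 2) ?_ (by nlinarith [hc2])
    rw [hvz, ha, hb, hdpt, hdp]; ring
  have hv0ξ0 : v z * ξ0 ≤ 0 := aux_sign hv0t0 ht0ξ0
  -- `v` is causal
  have hvvle : minkowski v v ≤ 0 := by
    rw [hvv']
    have h5 : (minkowski p p) ^ 2 * minkowski t t ≤ 0 :=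
      mul_nonpos_of_nonneg_of_nonpos (sq_nonneg _) ht.le
    linarith
  have hsqv : (v z) ^ 2 = v z * v z := sq (v z)
  have hsvv : sdot v v ≤ (v z) ^ 2 := by linarith
  have hsvvnn := sdot_self_nonneg v
  have hsvξ : (sdot v ξ) ^ 2 ≤ (v z * ξ0) ^ 2 := by
    calc (sdot v ξ) ^ 2 ≤ sdot v v * sdot ξ ξ := sdot_sq_le v ξ
      _ ≤ (v z) ^ 2 * ξ0 ^ 2 := mul_le_mul hsvv (le_of_lt hX) hXnn (sq_nonneg _)
      _ = (v z * ξ0) ^ 2 := by ring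
  have hfinal : 0 ≤ minkowski v ξ := by
    rw [hdv]; exact aux_ge hsvξ hv0ξ0
  have hQ : 2 * minkowski p t * minkowski p ξ - minkowski t ξ * minkowski p p
      = 2 * minkowski v ξ := by rw [hvξ, hb]; ring
  rw [hQ]; linarith
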